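/- If h₁, h₂, g : ℝ → ℝ are orientation-preserving homeomorphisms of ℝ such that all difference quotients (h(a)-h(b))/(a-b) of h₁ and h₂ lie in (1 - ε/4, 1 + ε/4) and all difference quotients of g lie in (1 - ε/4, 1 + ε/4), where 0 < ε < 4/5, then the composition h₁ ∘ h₂⁻¹ ∘ g has all difference quotients in (1 - ε, 1 + ε). -/

import Mathlib

open Set Filter Metric Topology

/-- A continuous flow on `M`. -/
def IsFlow {M : Type*} [TopologicalSpace M] (φ : ℝ × M → M) : Prop :=
  Continuous φ ∧ (∀ x, φ (0, x) = x) ∧ ∀ s t x, φ (s + t, x) = φ (s, φ (t, x))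

/-- Orientation preserving homeomorphism of `ℝ`. -/
def IsRep (f : ℝ → ℝ) : Prop :=
  Continuous f ∧ Function.Bijective f ∧ StrictMono f

/-- Element of `Rep(ε)`: all difference quotients within `ε` of `1`. -/
def IsRepE (ε : ℝ) (f : ℝ → ℝ) : Prop :=
  IsRep f ∧ ∀ a b : ℝ, b < a → |(f a - f b) / (a - b) - 1| < ε

/-- A `d`-pseudotrajectory of the flow `φ`. -/
def IsPseudo {M : Type*} [PseudoMetricSpace M] (φ : ℝ × M → M) (d : ℝ) (ξ : ℝ → M) : Prop :=
  ∀ t : ℝ, ∀ s ∈ Set.Icc (0:ℝ) 1, dist (ξ (t + s)) (φ (s, ξ t)) < d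

/-- The standard shadowing property. -/
def StandardShadowing {M : Type*} [PseudoMetricSpace M] (φ : ℝ × M → M) : Prop :=
  ∀ ε > 0, ∃ d > 0, ∀ ξ : ℝ → M, IsPseudo φ d ξ →
    ∃ x : M, ∃ h : ℝ → ℝ, IsRepE ε h ∧ ∀ t, dist (ξ t) (φ (h t, x)) < ε

/-- The oriented shadowing property. -/
def OrientedShadowing {M : Type*} [PseudoMetricSpace M] (φ : ℝ × M → M) : Prop :=
  ∀ ε > 0, ∃ d > 0, ∀ ξ : ℝ → M, IsPseudo φ d ξ →
    ∃ x : M, ∃ h : ℝ → ℝ, IsRep h ∧ ∀ t, dist (ξ t) (φ (h t, x)) < ε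

/-- A singularity (fixed point) of the flow. -/
def IsSingularity {M : Type*} (φ : ℝ × M → M) (p : M) : Prop :=
  ∀ t : ℝ, φ (t, p) = p

/-- A closed (periodic, non-fixed) orbit of the flow. -/
def IsClosedOrbit {M : Type*} (φ : ℝ × M → M) (Λ : Set M) : Prop :=
  ∃ (x₀ : M) (T : ℝ), 0 < T ∧ φ (T, x₀) = x₀ ∧ (∀ t ∈ Set.Ioo 0 T, φ (t, x₀) ≠ x₀) ∧
    Λ = Set.range (fun t : ℝ => φ (t, x₀))

/-- A critical element: a singularity or a closed orbit. -/
def IsCriticalElement {M : Type*} (φ : ℝ × M → M) (Λ : Set M) : Prop :=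
  (∃ p, IsSingularity φ p ∧ Λ = {p}) ∨ IsClosedOrbit φ Λ

/-- A nonwandering point of the flow. -/
def IsNonWandering {M : Type*} [TopologicalSpace M] (φ : ℝ × M → M) (x : M) : Prop :=
  ∀ V : Set M, IsOpen V → x ∈ V → ∀ T > 0, ∃ t > T, ∃ y ∈ V, φ (t, y) ∈ V

/-- The ω-limit set of a point. -/
def OmegaLim {M : Type*} [PseudoMetricSpace M] (φ : ℝ × M → M) (x : M) : Set M :=
  {y | ∀ ε > 0, ∀ T : ℝ, ∃ t > T, dist (φ (t, x)) y < ε}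

/-- The α-limit set of a point. -/
def AlphaLim {M : Type*} [PseudoMetricSpace M] (φ : ℝ × M → M) (x : M) : Set M :=
  {y | ∀ ε > 0, ∀ T : ℝ, ∃ t < T, dist (φ (t, x)) y < ε}

/-- Asymptotic stability of a compact invariant set `K`. -/
def IsAsympStable {M : Type*} [MetricSpace M] (φ : ℝ × M → M) (K : Set M) : Prop :=
  ∀ V : Set M, IsOpen V → K ⊆ V → ∃ U : Set M, IsOpen U ∧ K ⊆ U ∧ ∀ x ∈ U,
    (∀ t ≥ (0:ℝ), φ (t, x) ∈ V) ∧
    Tendsto (fun t => Metric.infDist (φ (t, x)) K) atTop (nhds 0)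

/-- Backward asymptotic stability of a compact invariant set `K`. -/
def IsBackAsympStable {M : Type*} [MetricSpace M] (φ : ℝ × M → M) (K : Set M) : Prop :=
  ∀ V : Set M, IsOpen V → K ⊆ V → ∃ U : Set M, IsOpen U ∧ K ⊆ U ∧ ∀ x ∈ U,
    (∀ t ≤ (0:ℝ), φ (t, x) ∈ V) ∧
    Tendsto (fun t => Metric.infDist (φ (t, x)) K) atBot (nhds 0)

lemma quot_bound (δ q₁ q₂ q₃ : ℝ) (hδ0 : 0 < δ) (hδ : δ < 1/5)
    (hq₁ : |q₁ - 1| < δ) (hq₂ : |q₂ - 1| < δ) (hq₃ : |q₃ - 1| < δ) :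
    |q₁ / q₂ * q₃ - 1| < 4 * δ := by
  rw [abs_lt] at *
  have hq₂0 : 0 < q₂ := by linarith
  have h1 : q₁ * q₃ / q₂ < 1 + 4 * δ := by rw [div_lt_iff₀ hq₂0]; nlinarith
  have h2 : 1 - 4 * δ < q₁ * q₃ / q₂ := by rw [lt_div_iff₀ hq₂0]; nlinarith
  have h3 : q₁ / q₂ * q₃ = q₁ * q₃ / q₂ := by ring
  rw [h3]
  constructor <;> linarith

/-- composition of reparametrizations. -/
theorem rep_comp (ε : ℝ) (hε : 0 < ε) (hε' : ε < 4 / 5)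
    (h₁ h₂ g h₂inv : ℝ → ℝ)
    (hh₁ : IsRepE (ε / 4) h₁) (hh₂ : IsRepE (ε / 4) h₂) (hg : IsRepE (ε / 4) g)
    (hinv₁ : ∀ x, h₂ (h₂inv x) = x) (hinv₂ : ∀ x, h₂inv (h₂ x) = x) :
    IsRepE ε (h₁ ∘ h₂inv ∘ g) := by
  obtain ⟨⟨hc₁, hb₁, hm₁⟩, hq₁⟩ := hh₁
  obtain ⟨⟨hc₂, hb₂, hm₂⟩, hq₂⟩ := hh₂
  obtain ⟨⟨hcg, hbg, hmg⟩, hqg⟩ := hg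
  have hmsurj : Function.Surjective h₂inv := fun x => ⟨h₂ x, hinv₂ x⟩
  have hminv : StrictMono h₂inv := by
    intro a b hab
    have := hm₂.lt_iff_lt (a := h₂inv a) (b := h₂inv b)
    rw [hinv₁, hinv₁] at this
    exact this.mp hab
  have hcinv : Continuous h₂inv :=
    (StrictMono.orderIsoOfSurjective h₂inv hminv hmsurj).continuous
  have hδ0 : 0 < ε / 4 := by linarith
  have hδ : ε / 4 < 1 / 5 := by linarith
  refine ⟨⟨hc₁.comp (hcinv.comp hcg), ?_, hm₁.comp (hminv.comp hmg)⟩, ?_⟩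
  · exact hb₁.comp ((Function.bijective_iff_has_inverse.mpr ⟨h₂, hinv₁, hinv₂⟩).comp hbg)
  · intro a b hab
    set u := g a
    set v := g b
    set w := h₂inv u
    set z := h₂inv v
    have hvu : v < u := hmg hab
    have hzw : z < w := hminv hvu
    have hab' : a - b ≠ 0 := sub_ne_zero.mpr hab.ne'
    have hvu' : u - v ≠ 0 := sub_ne_zero.mpr hvu.ne'
    have hzw' : w - z ≠ 0 := sub_ne_zero.mpr hzw.ne'
    have key : ((h₁ ∘ h₂inv ∘ g) a - (h₁ ∘ h₂inv ∘ g) b) / (a - b) =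
        ((h₁ w - h₁ z) / (w - z)) / ((h₂ w - h₂ z) / (w - z)) * ((g a - g b) / (a - b)) := by
      have e1 : h₂ w = u := hinv₁ u
      have e2 : h₂ z = v := hinv₁ v
      simp only [Function.comp_apply, e1, e2]
      show (h₁ w - h₁ z) / (a - b) = _
      field_simp
      rfl
    rw [key]
    have := quot_bound (ε / 4) ((h₁ w - h₁ z) / (w - z)) ((h₂ w - h₂ z) / (w - z))
      ((g a - g b) / (a - b)) hδ0 hδ (hq₁ w z hzw) (hq₂ w z hzw) (hqg a b hab)
    linarith [this, abs_nonneg (((h₁ w - h₁ z) / (w - z)) / ((h₂ w - h₂ z) / (w - z)) * ((g a - g b) / (a - b)) - 1)]
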